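/- For every x = (x_1,...,x_n) on the unit sphere S^{n-1} in R^n and every real q > 0, x_n^2 = (Γ((n+q)/2) / (2 π^{(n-1)/2} Γ((q+1)/2))) · ∫_{S^{n-1}} |⟨x,ξ⟩|^q · ( ((n+q)/q) ξ_n^2 − 1/q ) dξ. -/

import Mathlib

open MeasureTheory Real Finset Set Metric
open scoped RealInnerProductSpace

lemma abs_rpow_exp_integral {p : ℝ} (hp : -1 < p) :
    ∫ t : ℝ, |t| ^ p * Real.exp (-t ^ 2) = Real.Gamma ((p + 1) / 2) := by
  have h : ∫ t : ℝ, |t| ^ p * Real.exp (-t ^ 2)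
      = 2 * ∫ r in Ioi (0:ℝ), r ^ p * Real.exp (-r ^ 2) := by
    rw [← integral_comp_abs (f := fun r : ℝ => r ^ p * Real.exp (-r ^ 2))]
    congr 1; funext t; simp [sq_abs]
  have h2 : ∫ r in Ioi (0:ℝ), r ^ p * Real.exp (-r ^ 2)
      = ∫ r in Ioi (0:ℝ), r ^ p * Real.exp (-r ^ (2:ℝ)) := by
    refine setIntegral_congr_fun measurableSet_Ioi (fun r hr => ?_)
    rw [Real.rpow_two]
  rw [h, h2, integral_rpow_mul_exp_neg_rpow two_pos hp]
  ring
lemma even_integrable_of_Ioi {f : ℝ → ℝ} (hev : ∀ t, f (-t) = f t)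
    (hf : IntegrableOn f (Ioi 0)) : Integrable f := by
  have int_Iic : IntegrableOn f (Iic 0) := by
    rw [← Measure.map_neg_eq_self (volume : Measure ℝ)]
    have m : MeasurableEmbedding fun x : ℝ => -x := (Homeomorph.neg ℝ).measurableEmbedding
    rw [m.integrableOn_map_iff]
    simp_rw [Function.comp_def, hev, neg_preimage, neg_Iic, neg_zero]
    exact (integrableOn_Ici_iff_integrableOn_Ioi).mpr hf
  rw [← integrableOn_univ, ← Iic_union_Ioi (a := (0:ℝ))]
  exact int_Iic.union hf

lemma abs_rpow_exp_integrable {p : ℝ} (hp : 0 ≤ p) :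
    Integrable (fun t : ℝ => |t| ^ p * Real.exp (-t ^ 2)) := by
  apply even_integrable_of_Ioi (by intro t; simp [abs_neg])
  apply (integrableOn_rpow_mul_exp_neg_rpow (by linarith : (-1:ℝ) < p) two_pos).congr_fun
    (fun t ht => ?_) measurableSet_Ioi
  rw [abs_of_pos ht, Real.rpow_two]

lemma odd_rpow_exp_integrable {p : ℝ} (hp : 0 ≤ p) :
    Integrable (fun t : ℝ => |t| ^ p * t * Real.exp (-t ^ 2)) := by
  have hmeas : AEStronglyMeasurable (fun t : ℝ => |t| ^ p * t * Real.exp (-t ^ 2)) volume := by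
    refine Continuous.aestronglyMeasurable ?_
    exact ((continuous_abs.rpow_const (fun t => Or.inr hp)).mul continuous_id).mul
      (Real.continuous_exp.comp (continuous_pow 2).neg)
  refine (abs_rpow_exp_integrable (p := p + 1) (by linarith)).mono' hmeas ?_
  filter_upwards with t
  have : ‖|t| ^ p * t * Real.exp (-t ^ 2)‖ = |t| ^ (p + 1) * Real.exp (-t ^ 2) := by
    rw [Real.norm_eq_abs, abs_mul, abs_mul, abs_exp,
      abs_of_nonneg (Real.rpow_nonneg (abs_nonneg t) p),
      Real.rpow_add_one' (abs_nonneg t) (by linarith)]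
  rw [this]

lemma odd_rpow_exp_integral_zero {p : ℝ} :
    ∫ t : ℝ, |t| ^ p * t * Real.exp (-t ^ 2) = 0 := by
  have h : ∫ t : ℝ, |t| ^ p * t * Real.exp (-t ^ 2)
      = ∫ t : ℝ, |(-t)| ^ p * (-t) * Real.exp (-(-t) ^ 2) := by
    rw [← integral_neg_eq_self]
  have h2 : ∫ t : ℝ, |(-t)| ^ p * (-t) * Real.exp (-(-t) ^ 2)
      = - ∫ t : ℝ, |t| ^ p * t * Real.exp (-t ^ 2) := by
    rw [← integral_neg]; congr 1; funext t; simp [abs_neg]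
  linarith [h.trans h2]

lemma gauss_integral : ∫ t : ℝ, Real.exp (-t ^ 2) = Real.sqrt π := by
  simpa using integral_gaussian 1
lemma polar_formula {n : ℕ} (hn : 1 ≤ n)
    (g : Metric.sphere (0 : EuclideanSpace ℝ (Fin n)) 1 → ℝ) (f : ℝ → ℝ)
    (Φ : EuclideanSpace ℝ (Fin n) → ℝ)
    (hΦ : ∀ (ξ : Metric.sphere (0 : EuclideanSpace ℝ (Fin n)) 1) (r : ℝ), 0 < r →
      Φ (r • (ξ : EuclideanSpace ℝ (Fin n))) = f r * g ξ) :
    ∫ y, Φ y = (∫ ξ, g ξ ∂(volume.toSphere)) * ∫ r in Ioi (0:ℝ), r ^ (n - 1) * f r := by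
  haveI : Nontrivial (EuclideanSpace ℝ (Fin n)) :=
    ⟨EuclideanSpace.single ⟨0, hn⟩ 1, 0, fun h => by simpa using congrArg norm h⟩
  have hdim : Module.finrank ℝ (EuclideanSpace ℝ (Fin n)) = n := finrank_euclideanSpace_fin
  calc
    ∫ y, Φ y = ∫ x : ({(0:EuclideanSpace ℝ (Fin n))}ᶜ : Set _), Φ x.1
        ∂((volume : Measure (EuclideanSpace ℝ (Fin n))).comap Subtype.val) := by
      rw [integral_subtype_comap (measurableSet_singleton _).compl fun x => Φ x,
        restrict_compl_singleton]
    _ = ∫ z : Metric.sphere (0 : EuclideanSpace ℝ (Fin n)) 1 × Ioi (0:ℝ),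
          g z.1 * f z.2.1
        ∂((volume : Measure (EuclideanSpace ℝ (Fin n))).toSphere.prod
            (Measure.volumeIoiPow (Module.finrank ℝ (EuclideanSpace ℝ (Fin n)) - 1))) := by
      rw [← (Measure.measurePreserving_homeomorphUnitSphereProd
        (volume : Measure (EuclideanSpace ℝ (Fin n)))).integral_comp
        (Homeomorph.measurableEmbedding _) (fun z => g z.1 * f z.2.1)]
      refine integral_congr_ae (Filter.Eventually.of_forall fun x => ?_)
      have hx : x.1 ≠ 0 := x.2
      have hpos : 0 < ‖x.1‖ := norm_pos_iff.2 hx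
      have := hΦ ((homeomorphUnitSphereProd _ x).1) ‖x.1‖ hpos
      simp only [homeomorphUnitSphereProd_apply_fst_coe] at this
      rw [smul_inv_smul₀ (ne_of_gt hpos)] at this
      show Φ x.1 = _
      rw [this, mul_comm]
      simp only [homeomorphUnitSphereProd_apply_snd_coe]
    _ = (∫ ξ, g ξ ∂(volume.toSphere)) * ∫ r : Ioi (0:ℝ), f r.1
          ∂(Measure.volumeIoiPow (Module.finrank ℝ (EuclideanSpace ℝ (Fin n)) - 1)) :=
      integral_prod_mul (f := fun ξ => g ξ) (g := fun r : Ioi (0:ℝ) => f r.1)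
    _ = (∫ ξ, g ξ ∂(volume.toSphere)) * ∫ r in Ioi (0:ℝ), r ^ (n - 1) * f r := by
      congr 1
      simp only [Measure.volumeIoiPow, ENNReal.ofReal, hdim]
      rw [integral_withDensity_eq_integral_smul
        (by exact (measurable_subtype_coe.pow_const _).real_toNNReal) _,
        integral_subtype_comap measurableSet_Ioi fun a : ℝ => Real.toNNReal (a ^ (n-1)) • f a,
        setIntegral_congr_fun measurableSet_Ioi fun r hr => ?_]
      rw [NNReal.smul_def, Real.coe_toNNReal _ (pow_nonneg (le_of_lt hr) _), smul_eq_mul]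
noncomputable def Ffun (q : ℝ) {n : ℕ} (i0 i j : Fin n) (k : Fin n) : ℝ → ℝ := fun t =>
  (if k = i0 then |t| ^ q else 1) * ((if k = i then t else 1) * (if k = j then t else 1)) *
    Real.exp (-t ^ 2)

lemma Ffun_prod {q : ℝ} {n : ℕ} (i0 i j : Fin n) (w : Fin n → ℝ) :
    ∏ k, Ffun q i0 i j k (w k)
      = |w i0| ^ q * (w i * w j) * Real.exp (-∑ k, w k ^ 2) := by
  simp only [Ffun]
  rw [Finset.prod_mul_distrib, Finset.prod_mul_distrib, Finset.prod_mul_distrib,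
    Finset.prod_ite_eq', Finset.prod_ite_eq', Finset.prod_ite_eq', ← Real.exp_sum]
  simp

lemma Ffun_integrable {q : ℝ} (hq : 0 ≤ q) {n : ℕ} (i0 i j : Fin n) (k : Fin n) :
    Integrable (Ffun q i0 i j k) := by
  have h2 : ∀ a : ℝ, 0 ≤ a → Integrable (fun t : ℝ => |t| ^ a * (t * t) * Real.exp (-t ^ 2)) := by
    intro a ha
    have := abs_rpow_exp_integrable (p := a + 2) (by linarith)
    refine this.congr (Filter.Eventually.of_forall fun t => ?_)
    show |t| ^ (a + 2) * Real.exp (-t ^ 2) = |t| ^ a * (t * t) * Real.exp (-t ^ 2)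
    rw [Real.rpow_add' (abs_nonneg t) (by positivity), Real.rpow_two, sq_abs]
    ring
  have hA := h2 q hq
  have hB := odd_rpow_exp_integrable (p := q) hq
  have hC := abs_rpow_exp_integrable (p := q) hq
  have hD : Integrable (fun t : ℝ => t * t * Real.exp (-t ^ 2)) :=
    (h2 0 le_rfl).congr (Filter.Eventually.of_forall fun t => by simp)
  have hE : Integrable (fun t : ℝ => t * Real.exp (-t ^ 2)) :=
    (odd_rpow_exp_integrable (p := 0) le_rfl).congr
      (Filter.Eventually.of_forall fun t => by simp)
  have hF : Integrable (fun t : ℝ => Real.exp (-t ^ 2)) :=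
    (abs_rpow_exp_integrable (p := 0) le_rfl).congr
      (Filter.Eventually.of_forall fun t => by simp)
  unfold Ffun
  split_ifs <;> (try simp only [one_mul, mul_one]) <;>
    first
      | exact hA
      | exact hB
      | exact hC
      | exact hD
      | exact hE
      | exact hF

lemma term_integrable {q : ℝ} (hq : 0 ≤ q) {n : ℕ} (i0 i j : Fin n) :
    Integrable (fun w : Fin n → ℝ =>
      |w i0| ^ q * (w i * w j) * Real.exp (-∑ k, w k ^ 2)) := by
  have := Integrable.fintype_prod_dep (f := fun k => Ffun q i0 i j k)
    (fun k => Ffun_integrable hq i0 i j k)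
  exact this.congr (Filter.Eventually.of_forall fun w => Ffun_prod i0 i j w)

lemma gamma_three_halves : Real.Gamma ((3:ℝ)/2) = Real.sqrt π / 2 := by
  have h : (3:ℝ)/2 = 1/2 + 1 := by norm_num
  rw [h, Real.Gamma_add_one (by norm_num), Real.Gamma_one_half_eq]
  ring

lemma V1 {q : ℝ} (hq : 0 < q) :
    ∫ t : ℝ, |t| ^ q * (t * t) * Real.exp (-t ^ 2) = Real.Gamma ((q + 3) / 2) := by
  have h : ∀ t : ℝ, |t| ^ q * (t * t) * Real.exp (-t ^ 2)
      = |t| ^ (q + 2) * Real.exp (-t ^ 2) := by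
    intro t
    rw [Real.rpow_add' (abs_nonneg t) (by positivity), Real.rpow_two, sq_abs]
    ring
  rw [integral_congr_ae (Filter.Eventually.of_forall h),
    abs_rpow_exp_integral (by linarith)]
  norm_num
  ring_nf

lemma V4 : ∫ t : ℝ, t * t * Real.exp (-t ^ 2) = Real.sqrt π / 2 := by
  have h : ∀ t : ℝ, t * t * Real.exp (-t ^ 2)
      = |t| ^ ((2:ℝ)) * Real.exp (-t ^ 2) := by
    intro t; rw [Real.rpow_two, sq_abs]; ring
  rw [integral_congr_ae (Filter.Eventually.of_forall h),
    abs_rpow_exp_integral (by norm_num)]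
  norm_num [gamma_three_halves]

lemma V5 : ∫ t : ℝ, t * Real.exp (-t ^ 2) = 0 := by
  have h : ∀ t : ℝ, t * Real.exp (-t ^ 2) = |t| ^ ((0:ℝ)) * t * Real.exp (-t ^ 2) := by
    intro t; rw [Real.rpow_zero]; ring
  rw [integral_congr_ae (Filter.Eventually.of_forall h), odd_rpow_exp_integral_zero]

lemma V6 : ∫ t : ℝ, Real.exp (-t ^ 2) = Real.sqrt π := by
  have h : ∀ t : ℝ, Real.exp (-t ^ 2) = |t| ^ ((0:ℝ)) * Real.exp (-t ^ 2) := by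
    intro t; rw [Real.rpow_zero]; ring
  rw [integral_congr_ae (Filter.Eventually.of_forall h), abs_rpow_exp_integral (by norm_num)]
  rw [show ((0:ℝ)+1)/2 = 1/2 by norm_num, Real.Gamma_one_half_eq]

lemma term_eval {q : ℝ} (hq : 0 < q) {n : ℕ} (i0 i j : Fin n) :
    ∫ w : Fin n → ℝ, |w i0| ^ q * (w i * w j) * Real.exp (-∑ k, w k ^ 2)
      = if i = j then
          (if i = i0 then Real.Gamma ((q+3)/2) * Real.sqrt π ^ (n-1)
           else Real.Gamma ((q+1)/2) * (Real.sqrt π / 2) * Real.sqrt π ^ (n-2))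
        else 0 := by
  have hint : ∫ w : Fin n → ℝ, |w i0| ^ q * (w i * w j) * Real.exp (-∑ k, w k ^ 2)
      = ∏ k, ∫ t : ℝ, Ffun q i0 i j k t := by
    rw [← MeasureTheory.integral_fintype_prod_eq_prod (fun k => Ffun q i0 i j k)]
    exact integral_congr_ae (Filter.Eventually.of_forall fun w => (Ffun_prod i0 i j w).symm)
  rw [hint]
  by_cases hij : i = j
  · subst hij
    by_cases hii0 : i = i0
    · subst hii0
      rw [if_pos rfl, if_pos rfl, ← Finset.mul_prod_erase Finset.univ _ (Finset.mem_univ i)]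
      congr 1
      · have : ∀ t : ℝ, Ffun q i i i i t = |t| ^ q * (t * t) * Real.exp (-t ^ 2) := by
          intro t; simp [Ffun]
        rw [integral_congr_ae (Filter.Eventually.of_forall this), V1 hq]
      · rw [Finset.prod_congr rfl (fun k hk => ?_), Finset.prod_const,
          Finset.card_erase_of_mem (Finset.mem_univ i), Finset.card_univ, Fintype.card_fin]
        have hk' : k ≠ i := (Finset.mem_erase.1 hk).1
        have : ∀ t : ℝ, Ffun q i i i k t = Real.exp (-t ^ 2) := by
          intro t; simp [Ffun, hk']
        rw [integral_congr_ae (Filter.Eventually.of_forall this), V6]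
    · rw [if_pos rfl, if_neg hii0,
        ← Finset.mul_prod_erase Finset.univ _ (Finset.mem_univ i0),
        ← Finset.mul_prod_erase _ _
          (Finset.mem_erase.2 ⟨hii0, Finset.mem_univ i⟩)]
      have e1 : ∫ t : ℝ, Ffun q i0 i i i0 t = Real.Gamma ((q+1)/2) := by
        have : ∀ t : ℝ, Ffun q i0 i i i0 t = |t| ^ q * Real.exp (-t ^ 2) := by
          intro t; simp [Ffun, Ne.symm hii0]
        rw [integral_congr_ae (Filter.Eventually.of_forall this),
          abs_rpow_exp_integral (by linarith)]
      have e2 : ∫ t : ℝ, Ffun q i0 i i i t = Real.sqrt π / 2 := by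
        have : ∀ t : ℝ, Ffun q i0 i i i t = t * t * Real.exp (-t ^ 2) := by
          intro t; simp [Ffun, hii0]
        rw [integral_congr_ae (Filter.Eventually.of_forall this), V4]
      have e3 : ∏ k ∈ (Finset.univ.erase i0).erase i, (∫ t : ℝ, Ffun q i0 i i k t)
          = Real.sqrt π ^ (n-2) := by
        rw [Finset.prod_congr rfl (fun k hk => ?_), Finset.prod_const,
          Finset.card_erase_of_mem (Finset.mem_erase.2 ⟨hii0, Finset.mem_univ i⟩),
          Finset.card_erase_of_mem (Finset.mem_univ i0), Finset.card_univ, Fintype.card_fin]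
        · rfl
        · have hk1 : k ≠ i := (Finset.mem_erase.1 hk).1
          have hk2 : k ≠ i0 := (Finset.mem_erase.1 ((Finset.mem_erase.1 hk).2)).1
          have : ∀ t : ℝ, Ffun q i0 i i k t = Real.exp (-t ^ 2) := by
            intro t; simp [Ffun, hk1, hk2]
          rw [integral_congr_ae (Filter.Eventually.of_forall this), V6]
      rw [e1, e2, e3]
      ring
  · rw [if_neg hij]
    refine Finset.prod_eq_zero (Finset.mem_univ i) ?_
    by_cases hii0 : i = i0
    · have hj : i0 ≠ j := fun h => hij (hii0.trans h)
      have : ∀ t : ℝ, Ffun q i0 i j i t = |t| ^ q * t * Real.exp (-t ^ 2) := by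
        intro t; simp [Ffun, hii0, hj]
      rw [integral_congr_ae (Filter.Eventually.of_forall this), odd_rpow_exp_integral_zero]
    · have : ∀ t : ℝ, Ffun q i0 i j i t = t * Real.exp (-t ^ 2) := by
        intro t; simp [Ffun, hii0, hij]
      rw [integral_congr_ae (Filter.Eventually.of_forall this), V5]

noncomputable def Gfun (q : ℝ) {n : ℕ} (i0 : Fin n) (k : Fin n) : ℝ → ℝ := fun t =>
  (if k = i0 then |t| ^ q else 1) * Real.exp (-t ^ 2)

lemma Gfun_prod {q : ℝ} {n : ℕ} (i0 : Fin n) (w : Fin n → ℝ) :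
    ∏ k, Gfun q i0 k (w k) = |w i0| ^ q * Real.exp (-∑ k, w k ^ 2) := by
  simp only [Gfun]
  rw [Finset.prod_mul_distrib, Finset.prod_ite_eq', ← Real.exp_sum]
  simp

lemma Gfun_integrable {q : ℝ} (hq : 0 ≤ q) {n : ℕ} (i0 k : Fin n) :
    Integrable (Gfun q i0 k) := by
  unfold Gfun
  split_ifs
  · exact abs_rpow_exp_integrable hq
  · exact (abs_rpow_exp_integrable (p := 0) le_rfl).congr
      (Filter.Eventually.of_forall fun t => by simp)

lemma termB_integrable {q : ℝ} (hq : 0 ≤ q) {n : ℕ} (i0 : Fin n) :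
    Integrable (fun w : Fin n → ℝ => |w i0| ^ q * Real.exp (-∑ k, w k ^ 2)) := by
  have := Integrable.fintype_prod_dep (f := fun k => Gfun q i0 k)
    (fun k => Gfun_integrable hq i0 k)
  exact this.congr (Filter.Eventually.of_forall fun w => Gfun_prod i0 w)

lemma termB_eval {q : ℝ} (hq : 0 < q) {n : ℕ} (i0 : Fin n) :
    ∫ w : Fin n → ℝ, |w i0| ^ q * Real.exp (-∑ k, w k ^ 2)
      = Real.Gamma ((q+1)/2) * Real.sqrt π ^ (n-1) := by
  have hint : ∫ w : Fin n → ℝ, |w i0| ^ q * Real.exp (-∑ k, w k ^ 2)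
      = ∏ k, ∫ t : ℝ, Gfun q i0 k t := by
    rw [← MeasureTheory.integral_fintype_prod_eq_prod (fun k => Gfun q i0 k)]
    exact integral_congr_ae (Filter.Eventually.of_forall fun w => (Gfun_prod i0 w).symm)
  rw [hint, ← Finset.mul_prod_erase Finset.univ _ (Finset.mem_univ i0)]
  congr 1
  · have : ∀ t : ℝ, Gfun q i0 i0 t = |t| ^ q * Real.exp (-t ^ 2) := by
      intro t; simp [Gfun]
    rw [integral_congr_ae (Filter.Eventually.of_forall this),
      abs_rpow_exp_integral (by linarith)]
  · rw [Finset.prod_congr rfl (fun k hk => ?_), Finset.prod_const,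
      Finset.card_erase_of_mem (Finset.mem_univ i0), Finset.card_univ, Fintype.card_fin]
    have hk' : k ≠ i0 := (Finset.mem_erase.1 hk).1
    have : ∀ t : ℝ, Gfun q i0 k t = Real.exp (-t ^ 2) := by
      intro t; simp [Gfun, hk']
    rw [integral_congr_ae (Filter.Eventually.of_forall this), V6]

lemma gaussA_pi {n : ℕ} (hn : 1 ≤ n) {q : ℝ} (hq : 0 < q) (c : Fin n → ℝ)
    (hc : ∑ i, c i ^ 2 = 1) (i0 : Fin n) :
    ∫ w : Fin n → ℝ, |w i0| ^ q * (∑ i, c i * w i) ^ 2 * Real.exp (-∑ k, w k ^ 2)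
      = Real.sqrt π ^ (n-1) * Real.Gamma ((q+1)/2) * (1 + q * c i0 ^ 2) / 2 := by
  have hpt : ∀ w : Fin n → ℝ,
      |w i0| ^ q * (∑ i, c i * w i) ^ 2 * Real.exp (-∑ k, w k ^ 2)
      = ∑ i, ∑ j, c i * c j *
          (|w i0| ^ q * (w i * w j) * Real.exp (-∑ k, w k ^ 2)) := by
    intro w
    rw [sq, Finset.sum_mul_sum]
    simp only [Finset.mul_sum, Finset.sum_mul]
    exact Finset.sum_congr rfl fun i _ => Finset.sum_congr rfl fun j _ => by ring
  rw [integral_congr_ae (Filter.Eventually.of_forall hpt)]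
  rw [integral_finset_sum _ (fun i _ => integrable_finset_sum _
    (fun j _ => ((term_integrable hq.le i0 i j).const_mul _)))]
  have : ∀ i, ∫ w : Fin n → ℝ, ∑ j, c i * c j *
      (|w i0| ^ q * (w i * w j) * Real.exp (-∑ k, w k ^ 2))
      = ∑ j, c i * c j * ∫ w : Fin n → ℝ,
        |w i0| ^ q * (w i * w j) * Real.exp (-∑ k, w k ^ 2) := by
    intro i
    rw [integral_finset_sum _ (fun j _ => (term_integrable hq.le i0 i j).const_mul _)]
    exact Finset.sum_congr rfl fun j _ => MeasureTheory.integral_const_mul _ _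
  simp only [this]
  have hdiag : ∀ i : Fin n, ∑ j, c i * c j * (∫ w : Fin n → ℝ,
      |w i0| ^ q * (w i * w j) * Real.exp (-∑ k, w k ^ 2))
      = c i ^ 2 * (if i = i0 then Real.Gamma ((q+3)/2) * Real.sqrt π ^ (n-1)
           else Real.Gamma ((q+1)/2) * (Real.sqrt π / 2) * Real.sqrt π ^ (n-2)) := by
    intro i
    rw [Finset.sum_eq_single i (fun j _ hji => ?_) (fun h => absurd (Finset.mem_univ i) h)]
    · rw [term_eval hq i0 i i, if_pos rfl, sq]
    · rw [term_eval hq i0 i j, if_neg (fun h => hji h.symm), mul_zero]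
  simp only [hdiag]
  set α := Real.Gamma ((q+3)/2) * Real.sqrt π ^ (n-1) with hα
  set β := Real.Gamma ((q+1)/2) * (Real.sqrt π / 2) * Real.sqrt π ^ (n-2) with hβ
  rw [← Finset.sum_erase_add _ _ (Finset.mem_univ i0), if_pos rfl]
  have herase : ∑ i ∈ Finset.univ.erase i0,
      c i ^ 2 * (if i = i0 then α else β) = (1 - c i0 ^ 2) * β := by
    rw [Finset.sum_congr rfl (fun i hi => ?_)]
    · rw [← Finset.sum_mul]
      congr 1
      have hsum : ∑ i ∈ Finset.univ.erase i0, c i ^ 2 + c i0 ^ 2 = 1 := by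
        simpa [hc] using Finset.sum_erase_add Finset.univ (fun i => c i ^ 2)
          (Finset.mem_univ i0)
      linarith
    · rw [if_neg (Finset.mem_erase.1 hi).1]
  rw [herase]
  have hGamma : Real.Gamma ((q+3)/2) = (q+1)/2 * Real.Gamma ((q+1)/2) := by
    rw [show (q+3)/2 = (q+1)/2 + 1 by ring, Real.Gamma_add_one (by positivity)]
  by_cases hn2 : 2 ≤ n
  · have hpow : Real.sqrt π ^ (n-2) * Real.sqrt π = Real.sqrt π ^ (n-1) := by
      rw [← pow_succ]
      congr 1
      omega
    rw [hα, hβ, hGamma, ← hpow]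
    ring
  · have hn1 : n = 1 := by omega
    subst hn1
    have hone : c i0 ^ 2 = 1 := by
      rw [← hc, Fintype.sum_eq_single i0 (fun j hj => absurd (Subsingleton.elim j i0) hj)]
    rw [hone, hα, hGamma]
    norm_num
    ring
section euc
variable {n : ℕ}

lemma exists_onb (hn : 1 ≤ n) (x : EuclideanSpace ℝ (Fin n)) (hx : ‖x‖ = 1) :
    ∃ b : OrthonormalBasis (Fin n) ℝ (EuclideanSpace ℝ (Fin n)), b ⟨0, hn⟩ = x := by
  have horth : Orthonormal ℝ (Set.restrict {(⟨0, hn⟩ : Fin n)} (fun _ : Fin n => x)) := by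
    constructor
    · intro i; exact hx
    · intro i j hij
      exact absurd (Subtype.ext ((i.2 : i.1 ∈ _).trans ((j.2 : j.1 ∈ _)).symm)) hij
  obtain ⟨b, hb⟩ := horth.exists_orthonormalBasis_extension_of_card_eq
    (by simp [finrank_euclideanSpace_fin])
  exact ⟨b, hb _ rfl⟩

lemma gauss_euc (hn : 1 ≤ n) {q : ℝ} (hq : 0 < q) (x : EuclideanSpace ℝ (Fin n))
    (hx : ‖x‖ = 1) (k : Fin n) :
    (∫ y : EuclideanSpace ℝ (Fin n), |⟪x, y⟫| ^ q * (y k) ^ 2 * Real.exp (-‖y‖ ^ 2)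
      = Real.sqrt π ^ (n-1) * Real.Gamma ((q+1)/2) * (1 + q * (x k) ^ 2) / 2) ∧
    (∫ y : EuclideanSpace ℝ (Fin n), |⟪x, y⟫| ^ q * Real.exp (-‖y‖ ^ 2)
      = Real.Gamma ((q+1)/2) * Real.sqrt π ^ (n-1)) := by
  set i0 : Fin n := ⟨0, hn⟩
  obtain ⟨b, hb⟩ := exists_onb hn x hx
  set c : EuclideanSpace ℝ (Fin n) := b.repr (EuclideanSpace.single k (1:ℝ)) with hc_def
  have hcnorm : ∑ i, c i ^ 2 = 1 := by
    have h1 : ‖c‖ = 1 := by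
      rw [hc_def, b.repr.norm_map, EuclideanSpace.norm_single, norm_one]
    have h2 : ‖c‖ ^ 2 = ∑ i, c i ^ 2 := by
      rw [EuclideanSpace.norm_eq, Real.sq_sqrt (by positivity)]
      simp [Real.norm_eq_abs, sq_abs]
    rw [← h2, h1, one_pow]
  have hc0 : c i0 = x k := by
    have h1 : c i0 = ⟪EuclideanSpace.single i0 (1:ℝ), c⟫ := by
      rw [EuclideanSpace.inner_single_left]; simp
    rw [h1, hc_def, ← b.repr_self i0, b.repr.inner_map_map, hb,
      EuclideanSpace.inner_single_right]
    simp
  -- change of variables by the isometry b.repr.symm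
  have key : ∀ F : EuclideanSpace ℝ (Fin n) → ℝ,
      (∫ y : EuclideanSpace ℝ (Fin n), F y)
        = ∫ z : EuclideanSpace ℝ (Fin n), F (b.repr.symm z) := by
    intro F
    exact (b.measurePreserving_repr_symm.integral_comp
      (b.repr.symm.toHomeomorph.measurableEmbedding) F).symm
  have hinner : ∀ z : EuclideanSpace ℝ (Fin n), ⟪x, b.repr.symm z⟫ = z i0 := by
    intro z
    rw [show ⟪x, b.repr.symm z⟫ = ⟪b.repr x, b.repr (b.repr.symm z)⟫ from
      (b.repr.inner_map_map _ _).symm, b.repr.apply_symm_apply, ← hb, b.repr_self,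
      EuclideanSpace.inner_single_left]
    simp
    rfl
  have happ : ∀ z : EuclideanSpace ℝ (Fin n), (b.repr.symm z) k = ⟪c, z⟫ := by
    intro z
    have h1 : (b.repr.symm z) k = ⟪EuclideanSpace.single k (1:ℝ), b.repr.symm z⟫ := by
      rw [EuclideanSpace.inner_single_left]; simp
    rw [h1, show ⟪EuclideanSpace.single k (1:ℝ), b.repr.symm z⟫
      = ⟪b.repr (EuclideanSpace.single k (1:ℝ)), b.repr (b.repr.symm z)⟫ from
      (b.repr.inner_map_map _ _).symm, b.repr.apply_symm_apply, hc_def]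
  -- change to the pi measure
  have key2 : ∀ F : EuclideanSpace ℝ (Fin n) → ℝ,
      (∫ z : EuclideanSpace ℝ (Fin n), F z)
        = ∫ w : Fin n → ℝ, F ((MeasurableEquiv.toLp 2 (Fin n → ℝ)).symm.symm w) := by
    intro F
    exact (((EuclideanSpace.volume_preserving_symm_measurableEquiv_toLp (Fin n)).symm _).integral_comp
      (MeasurableEquiv.toLp 2 (Fin n → ℝ)).symm.symm.measurableEmbedding F).symm
  have hcoord : ∀ (w : Fin n → ℝ) (i : Fin n),
      ((MeasurableEquiv.toLp 2 (Fin n → ℝ)).symm.symm w) i = w i := fun w i => rfl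
  have hnormw : ∀ w : Fin n → ℝ,
      ‖(MeasurableEquiv.toLp 2 (Fin n → ℝ)).symm.symm w‖ ^ 2 = ∑ i, w i ^ 2 := by
    intro w
    rw [EuclideanSpace.norm_eq, Real.sq_sqrt (by positivity)]
    simp [hcoord, Real.norm_eq_abs, sq_abs]
  have hinnw : ∀ w : Fin n → ℝ,
      ⟪c, (MeasurableEquiv.toLp 2 (Fin n → ℝ)).symm.symm w⟫ = ∑ i, c i * w i := by
    intro w
    rw [PiLp.inner_apply]
    simp [hcoord, mul_comm]
  constructor
  · rw [key, key2]
    have : ∀ w : Fin n → ℝ,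
        |⟪x, b.repr.symm ((MeasurableEquiv.toLp 2 (Fin n → ℝ)).symm.symm w)⟫| ^ q
          * ((b.repr.symm ((MeasurableEquiv.toLp 2 (Fin n → ℝ)).symm.symm w)) k) ^ 2
          * Real.exp (-‖b.repr.symm ((MeasurableEquiv.toLp 2 (Fin n → ℝ)).symm.symm w)‖ ^ 2)
        = |w i0| ^ q * (∑ i, c i * w i) ^ 2 * Real.exp (-∑ j, w j ^ 2) := by
      intro w
      rw [hinner, happ, b.repr.symm.norm_map, hinnw, hnormw, hcoord]
    rw [integral_congr_ae (Filter.Eventually.of_forall this), gaussA_pi hn hq c hcnorm i0, hc0]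
  · rw [key, key2]
    have : ∀ w : Fin n → ℝ,
        |⟪x, b.repr.symm ((MeasurableEquiv.toLp 2 (Fin n → ℝ)).symm.symm w)⟫| ^ q
          * Real.exp (-‖b.repr.symm ((MeasurableEquiv.toLp 2 (Fin n → ℝ)).symm.symm w)‖ ^ 2)
        = |w i0| ^ q * Real.exp (-∑ j, w j ^ 2) := by
      intro w
      rw [hinner, b.repr.symm.norm_map, hnormw, hcoord]
    rw [integral_congr_ae (Filter.Eventually.of_forall this), termB_eval hq i0]
end euc
lemma radial_eval {n : ℕ} (hn : 1 ≤ n) {s : ℝ} (hs : 0 ≤ s) :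
    ∫ r in Ioi (0:ℝ), r ^ (n-1) * (r ^ s * Real.exp (-r^2))
      = Real.Gamma ((n + s)/2) / 2 := by
  have h : ∀ r ∈ Ioi (0:ℝ), r ^ (n-1) * (r ^ s * Real.exp (-r^2))
      = r ^ (((n-1:ℕ):ℝ) + s) * Real.exp (-r ^ (2:ℝ)) := by
    intro r hr
    rw [Real.rpow_add hr, ← Real.rpow_natCast r (n-1), Real.rpow_two]
    ring
  rw [setIntegral_congr_fun measurableSet_Ioi h,
    integral_rpow_mul_exp_neg_rpow two_pos (by have : (0:ℝ) ≤ ((n-1:ℕ):ℝ) := Nat.cast_nonneg _; linarith)]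
  rw [show (((n-1:ℕ):ℝ) + s + 1)/2 = ((n:ℝ) + s)/2 by
    push_cast [Nat.cast_sub hn]; ring]
  ring

theorem stmt1_aux (n : ℕ) (hn : 1 ≤ n) (x : EuclideanSpace ℝ (Fin n)) (hx : ‖x‖ = 1)
    (q : ℝ) (hq : 0 < q) (k : Fin n) :
    x k ^ 2 =
      Real.Gamma ((n + q) / 2) / (2 * Real.pi ^ ((n - 1 : ℝ) / 2) * Real.Gamma ((q + 1) / 2)) *
        ∫ ξ : Metric.sphere (0 : EuclideanSpace ℝ (Fin n)) 1,
          |⟪x, (ξ : EuclideanSpace ℝ (Fin n))⟫| ^ q *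
            (((n + q) / q) * (ξ : EuclideanSpace ℝ (Fin n)) k ^ 2 - 1 / q)
          ∂(volume.toSphere) := by
  have hA := (gauss_euc hn hq x hx k).1
  have hB := (gauss_euc hn hq x hx k).2
  set gI : Metric.sphere (0 : EuclideanSpace ℝ (Fin n)) 1 → ℝ :=
    fun ξ => |⟪x, (ξ : EuclideanSpace ℝ (Fin n))⟫| ^ q * ((ξ : EuclideanSpace ℝ (Fin n)) k) ^ 2
    with hgI
  set gJ : Metric.sphere (0 : EuclideanSpace ℝ (Fin n)) 1 → ℝ :=
    fun ξ => |⟪x, (ξ : EuclideanSpace ℝ (Fin n))⟫| ^ q with hgJ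
  -- polar decompositions
  have hΦI : ∀ (ξ : Metric.sphere (0 : EuclideanSpace ℝ (Fin n)) 1) (r : ℝ), 0 < r →
      (fun y : EuclideanSpace ℝ (Fin n) => |⟪x, y⟫| ^ q * (y k) ^ 2 * Real.exp (-‖y‖ ^ 2))
        (r • (ξ : EuclideanSpace ℝ (Fin n)))
      = (fun r : ℝ => r ^ (q + 2) * Real.exp (-r ^ 2)) r * gI ξ := by
    intro ξ r hr
    have hξ : ‖(ξ : EuclideanSpace ℝ (Fin n))‖ = 1 := by
      simpa [mem_sphere_zero_iff_norm] using ξ.2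
    have h1 : ⟪x, r • (ξ : EuclideanSpace ℝ (Fin n))⟫
        = r * ⟪x, (ξ : EuclideanSpace ℝ (Fin n))⟫ := real_inner_smul_right _ _ _
    have h2 : (r • (ξ : EuclideanSpace ℝ (Fin n))) k
        = r * (ξ : EuclideanSpace ℝ (Fin n)) k := rfl
    have h3 : ‖r • (ξ : EuclideanSpace ℝ (Fin n))‖ = r := by
      rw [norm_smul, hξ, mul_one, Real.norm_eq_abs, abs_of_pos hr]
    show |⟪x, r • (ξ : EuclideanSpace ℝ (Fin n))⟫| ^ q
        * ((r • (ξ : EuclideanSpace ℝ (Fin n))) k) ^ 2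
        * Real.exp (-‖r • (ξ : EuclideanSpace ℝ (Fin n))‖ ^ 2)
        = r ^ (q + 2) * Real.exp (-r ^ 2) * gI ξ
    rw [h1, h2, h3, abs_mul, abs_of_pos hr, Real.mul_rpow hr.le (abs_nonneg _),
      Real.rpow_add hr, Real.rpow_two, hgI]
    ring
  have hΦJ : ∀ (ξ : Metric.sphere (0 : EuclideanSpace ℝ (Fin n)) 1) (r : ℝ), 0 < r →
      (fun y : EuclideanSpace ℝ (Fin n) => |⟪x, y⟫| ^ q * Real.exp (-‖y‖ ^ 2))
        (r • (ξ : EuclideanSpace ℝ (Fin n)))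
      = (fun r : ℝ => r ^ q * Real.exp (-r ^ 2)) r * gJ ξ := by
    intro ξ r hr
    have hξ : ‖(ξ : EuclideanSpace ℝ (Fin n))‖ = 1 := by
      simpa [mem_sphere_zero_iff_norm] using ξ.2
    have h1 : ⟪x, r • (ξ : EuclideanSpace ℝ (Fin n))⟫
        = r * ⟪x, (ξ : EuclideanSpace ℝ (Fin n))⟫ := real_inner_smul_right _ _ _
    have h3 : ‖r • (ξ : EuclideanSpace ℝ (Fin n))‖ = r := by
      rw [norm_smul, hξ, mul_one, Real.norm_eq_abs, abs_of_pos hr]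
    show |⟪x, r • (ξ : EuclideanSpace ℝ (Fin n))⟫| ^ q
        * Real.exp (-‖r • (ξ : EuclideanSpace ℝ (Fin n))‖ ^ 2)
        = r ^ q * Real.exp (-r ^ 2) * gJ ξ
    rw [h1, h3, abs_mul, abs_of_pos hr, Real.mul_rpow hr.le (abs_nonneg _), hgJ]
    ring
  have polarI := polar_formula hn gI (fun r : ℝ => r ^ (q + 2) * Real.exp (-r ^ 2))
    (fun y : EuclideanSpace ℝ (Fin n) => |⟪x, y⟫| ^ q * (y k) ^ 2 * Real.exp (-‖y‖ ^ 2)) hΦI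
  have polarJ := polar_formula hn gJ (fun r : ℝ => r ^ q * Real.exp (-r ^ 2))
    (fun y : EuclideanSpace ℝ (Fin n) => |⟪x, y⟫| ^ q * Real.exp (-‖y‖ ^ 2)) hΦJ
  rw [radial_eval hn (by positivity : (0:ℝ) ≤ q + 2), hA] at polarI
  rw [radial_eval hn hq.le, hB] at polarJ
  -- integrability on the sphere
  haveI : IsFiniteMeasureOnCompacts
      ((volume : Measure (EuclideanSpace ℝ (Fin n))).toSphere) :=
    ⟨fun K _ => lt_of_le_of_lt (measure_mono (subset_univ K)) (measure_lt_top _ univ)⟩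
  have hcont_inner : Continuous gJ := by
    rw [hgJ]
    exact ((continuous_const.inner continuous_subtype_val).abs).rpow_const
      (fun ξ => Or.inr hq.le)
  have hcoordE : Continuous (fun y : EuclideanSpace ℝ (Fin n) => y k) := by
    refine (continuous_const.inner continuous_id :
      Continuous fun y : EuclideanSpace ℝ (Fin n) =>
        ⟪EuclideanSpace.single k (1:ℝ), y⟫).congr fun y => ?_
    rw [EuclideanSpace.inner_single_left]; simp
  have hcont_I : Continuous gI := by
    rw [hgI]
    exact (((continuous_const.inner continuous_subtype_val).abs).rpow_const
      (fun ξ => Or.inr hq.le)).mul ((hcoordE.comp continuous_subtype_val).pow 2)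
  have hI_int : Integrable gI (volume.toSphere) :=
    hcont_I.integrable_of_hasCompactSupport ((isClosed_tsupport _).isCompact)
  have hJ_int : Integrable gJ (volume.toSphere) :=
    hcont_inner.integrable_of_hasCompactSupport ((isClosed_tsupport _).isCompact)
  have hsplit : ∫ ξ : Metric.sphere (0 : EuclideanSpace ℝ (Fin n)) 1,
      |⟪x, (ξ : EuclideanSpace ℝ (Fin n))⟫| ^ q *
        (((n + q) / q) * (ξ : EuclideanSpace ℝ (Fin n)) k ^ 2 - 1 / q) ∂(volume.toSphere)
      = (n + q) / q * (∫ ξ, gI ξ ∂(volume.toSphere))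
        - (1 / q) * (∫ ξ, gJ ξ ∂(volume.toSphere)) := by
    rw [← integral_const_mul, ← integral_const_mul,
      ← integral_sub (hI_int.const_mul _) (hJ_int.const_mul _)]
    refine integral_congr_ae (Filter.Eventually.of_forall fun ξ => ?_)
    show _ = (n + q) / q * gI ξ - 1 / q * gJ ξ
    rw [hgI, hgJ]; ring
  rw [hsplit]
  -- final algebra
  set I := ∫ ξ, gI ξ ∂(volume.toSphere)
  set J := ∫ ξ, gJ ξ ∂(volume.toSphere)
  set P : ℝ := Real.sqrt π ^ (n - 1) with hP
  have hPpos : 0 < P := by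
    rw [hP]; exact pow_pos (Real.sqrt_pos.2 Real.pi_pos) _
  have hpiP : Real.pi ^ ((n - 1 : ℝ) / 2) = P := by
    rw [hP, Real.sqrt_eq_rpow, ← Real.rpow_natCast (π ^ ((1:ℝ)/2)) (n-1),
      ← Real.rpow_mul Real.pi_pos.le]
    congr 1
    rw [Nat.cast_sub hn]
    push_cast
    ring
  have hΓq1 : 0 < Real.Gamma ((q + 1) / 2) := Real.Gamma_pos_of_pos (by linarith)
  have hΓ0 : 0 < Real.Gamma ((n + q) / 2) := Real.Gamma_pos_of_pos (by positivity)
  have hΓ2 : Real.Gamma ((n + (q + 2)) / 2) = (n + q) / 2 * Real.Gamma ((n + q) / 2) := by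
    rw [show ((n:ℝ) + (q + 2)) / 2 = (n + q) / 2 + 1 by ring,
      Real.Gamma_add_one (by positivity)]
  have hIeq : I = P * Real.Gamma ((q + 1) / 2) * (1 + q * x k ^ 2)
      / ((n + q) / 2 * Real.Gamma ((n + q) / 2)) := by
    rw [eq_div_iff (by positivity)]
    rw [hΓ2] at polarI
    rw [hP]
    linarith [polarI]
  have hJeq : J = 2 * Real.Gamma ((q + 1) / 2) * P / Real.Gamma ((n + q) / 2) := by
    rw [eq_div_iff (ne_of_gt hΓ0), hP]
    linarith [polarJ]
  rw [hIeq, hJeq, hpiP]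
  have hnq : (0:ℝ) < n + q := by positivity
  field_simp
  ring

theorem stmt1 (n : ℕ) (hn : 1 ≤ n)
    (x : EuclideanSpace ℝ (Fin n)) (hx : x ∈ Metric.sphere (0 : EuclideanSpace ℝ (Fin n)) 1)
    (q : ℝ) (hq : 0 < q) :
    x ⟨n - 1, by omega⟩ ^ 2 =
      Real.Gamma ((n + q) / 2) / (2 * Real.pi ^ ((n - 1 : ℝ) / 2) * Real.Gamma ((q + 1) / 2)) *
        ∫ ξ : Metric.sphere (0 : EuclideanSpace ℝ (Fin n)) 1,
          |⟪x, (ξ : EuclideanSpace ℝ (Fin n))⟫| ^ q *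
            (((n + q) / q) * (ξ : EuclideanSpace ℝ (Fin n)) ⟨n - 1, by omega⟩ ^ 2 - 1 / q)
          ∂(volume.toSphere) := by
  exact stmt1_aux n hn x (by simpa [mem_sphere_zero_iff_norm] using hx) q hq _
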